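/- Assume r > c and fix i ∈ {0,…,r} and distinct indices j_1, j_2 ∈ {1,…,n_i}. (a) There exists a point z ∈ X̄ whose set of nonzero coordinates is exactly {z_{ij_1}, z_{ij_2}} if and only if n_i ≥ 3. (b) If moreover the exponent data is irredundant and n_i ≥ 3, then every z ∈ X̄ whose set of nonzero coordinates is exactly {z_{ij_1}, z_{ij_2}} satisfies rank J(z) = r−c if and only if r = c+1, n_i = 3 and l_{ij} = 1 for the unique index j ∉ {j_1,j_2}. -/

import Mathlib

open MvPolynomial

noncomputable section

/-- Index type for the variables `T i j` (`Sum.inl ⟨i, j⟩`) and `S k` (`Sum.inr k`). -/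
abbrev VarIdx (r m : ℕ) (nn : Fin (r + 1) → ℕ) : Type :=
  (Σ i : Fin (r + 1), Fin (nn i)) ⊕ Fin m

variable (𝕂 : Type) [Field 𝕂]

/-- The monomial `T_i^{l_i} = ∏_j T_{ij}^{l_{ij}}`. -/
def Tmon (r m : ℕ) (nn : Fin (r + 1) → ℕ)
    (l : ∀ i : Fin (r + 1), Fin (nn i) → ℕ) (i : Fin (r + 1)) :
    MvPolynomial (VarIdx r m nn) 𝕂 :=
  ∏ j : Fin (nn i), (X (Sum.inl ⟨i, j⟩) : MvPolynomial (VarIdx r m nn) 𝕂) ^ l i j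

/-- The map sending a column index of the `(c+2)×(c+2)` matrix defining `g_t`
to the corresponding column index of `A`, namely `0, …, c, c + (t+1)`. -/
def colOf (r c : ℕ) (hcr : c ≤ r) (t : Fin (r - c)) (p : Fin (c + 2)) : Fin (r + 1) :=
  if h : (p : ℕ) ≤ c then ⟨p, by omega⟩
  else ⟨c + 1 + t, by have := t.isLt; omega⟩

/-- The polynomial `g_t`: the determinant of the `(c+2)×(c+2)` matrix whose first
`c+1` rows are formed by the columns `a_0, …, a_c, a_{c+t}` of `A` (as constant
polynomials) and whose last row is `(T_0^{l_0}, …, T_c^{l_c}, T_{c+t}^{l_{c+t}})`. -/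
def gPoly (r c m : ℕ) (hcr : c ≤ r) (nn : Fin (r + 1) → ℕ)
    (l : ∀ i : Fin (r + 1), Fin (nn i) → ℕ)
    (A : Matrix (Fin (c + 1)) (Fin (r + 1)) 𝕂) (t : Fin (r - c)) :
    MvPolynomial (VarIdx r m nn) 𝕂 :=
  Matrix.det (Matrix.of fun q p : Fin (c + 2) =>
    if h : (q : ℕ) < c + 1 then C (A ⟨q, h⟩ (colOf r c hcr t p))
    else Tmon 𝕂 r m nn l (colOf r c hcr t p))

/-- The ring `R = 𝕂[T_{ij}, S_k] / ⟨g_1, …, g_{r-c}⟩`. -/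
abbrev RingAP (r c m : ℕ) (hcr : c ≤ r) (nn : Fin (r + 1) → ℕ)
    (l : ∀ i : Fin (r + 1), Fin (nn i) → ℕ)
    (A : Matrix (Fin (c + 1)) (Fin (r + 1)) 𝕂) : Type :=
  MvPolynomial (VarIdx r m nn) 𝕂 ⧸ Ideal.span (Set.range (gPoly 𝕂 r c m hcr nn l A))

end

noncomputable section
variable (𝕂 : Type) [Field 𝕂]

/-- A point `z ∈ 𝕂^{n+m}` is of big type if for every `i = 0,…,r` some
coordinate `z_{ij}` vanishes. -/
def BigType (r m : ℕ) (nn : Fin (r + 1) → ℕ) (z : VarIdx r m nn → 𝕂) : Prop :=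
  ∀ i : Fin (r + 1), ∃ j : Fin (nn i), z (Sum.inl ⟨i, j⟩) = 0

/-- A point `z ∈ 𝕂^{n+m}` is of leaf type if there is a set `I ⊆ {0,…,r}` with at most
`c` elements such that `z_{ij} = 0` implies `i ∈ I`. -/
def LeafType (r c m : ℕ) (nn : Fin (r + 1) → ℕ) (z : VarIdx r m nn → 𝕂) : Prop :=
  ∃ I : Finset (Fin (r + 1)), I.card ≤ c ∧
    ∀ (i : Fin (r + 1)) (j : Fin (nn i)), z (Sum.inl ⟨i, j⟩) = 0 → i ∈ I

/-- The Jacobian matrix of `g_1, …, g_{r-c}` evaluated at the point `z`. -/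
def Jac (r c m : ℕ) (hcr : c ≤ r) (nn : Fin (r + 1) → ℕ)
    (l : ∀ i : Fin (r + 1), Fin (nn i) → ℕ)
    (A : Matrix (Fin (c + 1)) (Fin (r + 1)) 𝕂) (z : VarIdx r m nn → 𝕂) :
    Matrix (Fin (r - c)) (VarIdx r m nn) 𝕂 :=
  Matrix.of fun t v =>
    MvPolynomial.eval z (MvPolynomial.pderiv v (gPoly 𝕂 r c m hcr nn l A t))

end

namespace S18
open MvPolynomial Finset

noncomputable section
variable {𝕂 : Type} [Field 𝕂] {r c m : ℕ} {nn : Fin (r + 1) → ℕ}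

lemma inl_mk_inj {i : Fin (r + 1)} {j j' : Fin (nn i)} :
    (Sum.inl ⟨i, j⟩ : VarIdx r m nn) = Sum.inl ⟨i, j'⟩ ↔ j = j' := by
  simp

lemma inl_mk_ne {i i₀ : Fin (r + 1)} (h : i₀ ≠ i) {j : Fin (nn i)} {j₀ : Fin (nn i₀)} :
    (Sum.inl ⟨i, j⟩ : VarIdx r m nn) ≠ Sum.inl ⟨i₀, j₀⟩ := by
  intro hh
  cases hh
  exact h rfl

/-- Row Finsupp: `∑ j, single (inl ⟨i,j⟩) (f j)`. -/
def rowF (r m : ℕ) (nn : Fin (r + 1) → ℕ) (i : Fin (r + 1)) (f : Fin (nn i) → ℕ) :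
    VarIdx r m nn →₀ ℕ :=
  ∑ j : Fin (nn i), Finsupp.single (Sum.inl ⟨i, j⟩) (f j)

lemma rowF_inr (i : Fin (r + 1)) (f : Fin (nn i) → ℕ) (k : Fin m) :
    rowF r m nn i f (Sum.inr k) = 0 := by
  simp [rowF, Finset.sum_apply', Finsupp.single_apply]

lemma rowF_inl_ne {i i₀ : Fin (r + 1)} (h : i₀ ≠ i) (f : Fin (nn i) → ℕ) (j₀ : Fin (nn i₀)) :
    rowF r m nn i f (Sum.inl ⟨i₀, j₀⟩) = 0 := by
  simp only [rowF, Finset.sum_apply']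
  exact Finset.sum_eq_zero fun j _ => Finsupp.single_eq_of_ne' (inl_mk_ne h)

lemma rowF_inl_self (i : Fin (r + 1)) (f : Fin (nn i) → ℕ) (j₀ : Fin (nn i)) :
    rowF r m nn i f (Sum.inl ⟨i, j₀⟩) = f j₀ := by
  simp only [rowF, Finset.sum_apply']
  rw [Finset.sum_eq_single j₀]
  · simp
  · intro j _ hne
    exact Finsupp.single_eq_of_ne' (by simpa [inl_mk_inj] using hne)
  · simp

lemma rowF_prod (i : Fin (r + 1)) (f : Fin (nn i) → ℕ) (z : VarIdx r m nn → 𝕂) :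
    (rowF r m nn i f).prod (fun v e => z v ^ e) =
      ∏ j : Fin (nn i), z (Sum.inl ⟨i, j⟩) ^ f j := by
  rw [rowF, ← Finsupp.prod_finset_sum_index (fun v => pow_zero _)
    (fun v e₁ e₂ => pow_add _ _ _)]
  exact Finset.prod_congr rfl fun j _ => Finsupp.prod_single_index (pow_zero _)

lemma Tmon_eq_monomial (l : ∀ i : Fin (r + 1), Fin (nn i) → ℕ) (i : Fin (r + 1)) :
    Tmon 𝕂 r m nn l i = monomial (rowF r m nn i (l i)) 1 := by
  rw [Tmon, rowF, monomial_sum_one]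
  exact Finset.prod_congr rfl fun j _ => X_pow_eq_monomial

lemma eval_Tmon (l : ∀ i : Fin (r + 1), Fin (nn i) → ℕ) (i : Fin (r + 1))
    (z : VarIdx r m nn → 𝕂) :
    eval z (Tmon 𝕂 r m nn l i) = ∏ j : Fin (nn i), z (Sum.inl ⟨i, j⟩) ^ l i j := by
  rw [Tmon_eq_monomial, eval_monomial, one_mul, rowF_prod]

lemma eval_pderiv_Tmon_zero (l : ∀ i : Fin (r + 1), Fin (nn i) → ℕ) (i : Fin (r + 1))
    (v : VarIdx r m nn) (h : rowF r m nn i (l i) v = 0) :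
    pderiv v (Tmon 𝕂 r m nn l i) = 0 := by
  rw [Tmon_eq_monomial, pderiv_monomial, h]
  simp

lemma eval_pderiv_Tmon (l : ∀ i : Fin (r + 1), Fin (nn i) → ℕ) (i : Fin (r + 1))
    (j₀ : Fin (nn i)) (z : VarIdx r m nn → 𝕂) :
    eval z (pderiv (Sum.inl ⟨i, j₀⟩) (Tmon 𝕂 r m nn l i)) =
      (l i j₀ : 𝕂) *
        ∏ j : Fin (nn i), z (Sum.inl ⟨i, j⟩) ^ (l i j - if j = j₀ then 1 else 0) := by
  rw [Tmon_eq_monomial, pderiv_monomial, eval_monomial, rowF_inl_self, one_mul]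
  congr 1
  have hd : rowF r m nn i (l i) - Finsupp.single (Sum.inl ⟨i, j₀⟩) 1 =
      rowF r m nn i (fun j => l i j - if j = j₀ then 1 else 0) := by
    ext v
    rcases v with (⟨i₀, j⟩ | k)
    · rcases eq_or_ne i₀ i with rfl | hne
      · rw [Finsupp.tsub_apply, rowF_inl_self, rowF_inl_self, Finsupp.single_apply]
        by_cases hj : j = j₀
        · subst hj; simp
        · rw [if_neg (by simpa [inl_mk_inj] using Ne.symm hj), if_neg hj]
      · rw [Finsupp.tsub_apply, rowF_inl_ne hne, rowF_inl_ne hne,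
          Finsupp.single_eq_of_ne' (inl_mk_ne hne)]
        simp
    · rw [Finsupp.tsub_apply, rowF_inr, rowF_inr,
        Finsupp.single_eq_of_ne' (by simp)]
      simp

  rw [hd, rowF_prod]

end
end S18
namespace S18
open MvPolynomial Finset

noncomputable section
variable {𝕂 : Type} [Field 𝕂] {r c m : ℕ} {nn : Fin (r + 1) → ℕ}

lemma colOf_injective (hcr : c ≤ r) (t : Fin (r - c)) :
    Function.Injective (colOf r c hcr t) := by
  intro p p' h
  have h' := congrArg Fin.val h
  unfold colOf at h'
  have hp := p.isLt
  have hp' := p'.isLt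
  split_ifs at h' <;> (apply Fin.ext; simp only at h' <;> omega)

lemma exists_colOf_eq (hcr : c ≤ r) (hrc : c < r) (i : Fin (r + 1)) :
    ∃ (t : Fin (r - c)) (p : Fin (c + 2)), colOf r c hcr t p = i := by
  by_cases hi : (i : ℕ) ≤ c
  · exact ⟨⟨0, by omega⟩, ⟨i, by omega⟩, by
      rw [colOf, dif_pos hi]⟩
  · have hi2 := i.isLt
    refine ⟨⟨(i : ℕ) - c - 1, by omega⟩, ⟨c + 1, by omega⟩, ?_⟩
    rw [colOf, dif_neg (by simp)]
    apply Fin.ext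
    simp only
    omega

/-- With `r = c + 1` there is, for every `t`, a `p` with `colOf t p = i`. -/
lemma exists_colOf_eq' (hcr : c ≤ r) (hr1 : r = c + 1) (t : Fin (r - c)) (i : Fin (r + 1)) :
    ∃ p : Fin (c + 2), colOf r c hcr t p = i := by
  by_cases hi : (i : ℕ) ≤ c
  · exact ⟨⟨i, by omega⟩, by rw [colOf, dif_pos hi]⟩
  · have hi2 := i.isLt
    have ht := t.isLt
    refine ⟨⟨c + 1, by omega⟩, ?_⟩
    rw [colOf, dif_neg (by simp)]
    apply Fin.ext
    simp only
    omega

/-- The minor of `A` obtained by taking columns `colOf t (p.succAbove ·)`. -/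
def minorAP (r c : ℕ) (hcr : c ≤ r) (A : Matrix (Fin (c + 1)) (Fin (r + 1)) 𝕂)
    (t : Fin (r - c)) (p : Fin (c + 2)) : 𝕂 :=
  Matrix.det (Matrix.of fun q p' : Fin (c + 1) => A q (colOf r c hcr t (p.succAbove p')))

/-- Signed minor coefficient. -/
def eAP (r c : ℕ) (hcr : c ≤ r) (A : Matrix (Fin (c + 1)) (Fin (r + 1)) 𝕂)
    (t : Fin (r - c)) (p : Fin (c + 2)) : 𝕂 :=
  (-1 : 𝕂) ^ ((c + 1) + (p : ℕ)) * minorAP r c hcr A t p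

lemma eAP_ne_zero (hcr : c ≤ r)
    (A : Matrix (Fin (c + 1)) (Fin (r + 1)) 𝕂)
    (hA : ∀ s : Finset (Fin (r + 1)), s.card = c + 1 →
      LinearIndependent 𝕂 fun j : s => A.transpose (j : Fin (r + 1)))
    (t : Fin (r - c)) (p : Fin (c + 2)) : eAP r c hcr A t p ≠ 0 := by
  have hminor : minorAP r c hcr A t p ≠ 0 := by
    set f : Fin (c + 1) → Fin (r + 1) := fun p' => colOf r c hcr t (p.succAbove p') with hf
    have hfinj : Function.Injective f :=
      (colOf_injective hcr t).comp (Fin.succAbove_right_injective)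
    set s : Finset (Fin (r + 1)) := Finset.image f Finset.univ with hs
    have hcard : s.card = c + 1 := by
      rw [hs, Finset.card_image_of_injective _ hfinj, Finset.card_univ, Fintype.card_fin]
    have hli := hA s hcard
    set g : Fin (c + 1) → s := fun p' => ⟨f p', by
      rw [hs]; exact Finset.mem_image_of_mem f (Finset.mem_univ p')⟩ with hg
    have hginj : Function.Injective g := fun a b hab => hfinj (congrArg Subtype.val hab)
    have hli2 : LinearIndependent 𝕂 fun p' : Fin (c + 1) => A.transpose (f p') :=
      hli.comp g hginj
    have hunit : IsUnit (Matrix.of fun q p' : Fin (c + 1) => A q (f p')) := by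
      rw [← Matrix.linearIndependent_cols_iff_isUnit]
      convert hli2 using 1
      rfl
    have := hunit.ne_zero
    rw [Matrix.isUnit_iff_isUnit_det] at hunit
    exact fun h => by
      rw [minorAP] at h
      exact hunit.ne_zero h
  intro h
  rcases mul_eq_zero.mp h with h1 | h1
  · exact (pow_ne_zero _ (neg_ne_zero.mpr one_ne_zero)) h1
  · exact hminor h1

lemma gPoly_eq (hcr : c ≤ r) (l : ∀ i : Fin (r + 1), Fin (nn i) → ℕ)
    (A : Matrix (Fin (c + 1)) (Fin (r + 1)) 𝕂) (t : Fin (r - c)) :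
    gPoly 𝕂 r c m hcr nn l A t =
      ∑ p : Fin (c + 2), C (eAP r c hcr A t p) * Tmon 𝕂 r m nn l (colOf r c hcr t p) := by
  rw [gPoly, Matrix.det_succ_row _ (Fin.last (c + 1))]
  refine Finset.sum_congr rfl fun p _ => ?_
  have hlast : ¬ ((Fin.last (c + 1) : Fin (c + 2)) : ℕ) < c + 1 := by simp
  have h1 : (Matrix.of fun q p : Fin (c + 2) =>
      if h : (q : ℕ) < c + 1 then C (A ⟨q, h⟩ (colOf r c hcr t p))
      else Tmon 𝕂 r m nn l (colOf r c hcr t p)) (Fin.last (c + 1)) p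
      = Tmon 𝕂 r m nn l (colOf r c hcr t p) := by
    simp only [Matrix.of_apply]
    rw [dif_neg hlast]
  rw [h1]
  have h2 : ((Matrix.of fun q p : Fin (c + 2) =>
      if h : (q : ℕ) < c + 1 then C (A ⟨q, h⟩ (colOf r c hcr t p))
      else Tmon 𝕂 r m nn l (colOf r c hcr t p)).submatrix
        (Fin.last (c + 1)).succAbove p.succAbove)
      = (C : 𝕂 →+* MvPolynomial (VarIdx r m nn) 𝕂).mapMatrix
          (Matrix.of fun q p' : Fin (c + 1) => A q (colOf r c hcr t (p.succAbove p'))) := by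
    ext q p'
    simp only [Matrix.submatrix_apply, Matrix.of_apply, RingHom.mapMatrix_apply,
      Matrix.map_apply, Fin.succAbove_last]
    rw [dif_pos (by simp [Fin.coe_castSucc, q.isLt] : ((q.castSucc : Fin (c+2)) : ℕ) < c + 1)]
    congr 1
  rw [h2, ← RingHom.map_det]
  rw [eAP, minorAP, Fin.val_last]
  simp only [map_mul, map_pow, map_neg, map_one]
  ring
end
end S18
namespace S18
open MvPolynomial Finset

noncomputable section
variable {𝕂 : Type} [Field 𝕂] {r c m : ℕ} {nn : Fin (r + 1) → ℕ}

lemma eval_gPoly (hcr : c ≤ r) (l : ∀ i : Fin (r + 1), Fin (nn i) → ℕ)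
    (A : Matrix (Fin (c + 1)) (Fin (r + 1)) 𝕂) (t : Fin (r - c)) (z : VarIdx r m nn → 𝕂) :
    eval z (gPoly 𝕂 r c m hcr nn l A t) =
      ∑ p : Fin (c + 2), eAP r c hcr A t p * eval z (Tmon 𝕂 r m nn l (colOf r c hcr t p)) := by
  rw [gPoly_eq, map_sum]
  exact Finset.sum_congr rfl fun p _ => by rw [map_mul, eval_C]

lemma Jac_apply (hcr : c ≤ r) (l : ∀ i : Fin (r + 1), Fin (nn i) → ℕ)
    (A : Matrix (Fin (c + 1)) (Fin (r + 1)) 𝕂) (z : VarIdx r m nn → 𝕂)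
    (t : Fin (r - c)) (v : VarIdx r m nn) :
    Jac 𝕂 r c m hcr nn l A z t v =
      ∑ p : Fin (c + 2),
        eAP r c hcr A t p * eval z (pderiv v (Tmon 𝕂 r m nn l (colOf r c hcr t p))) := by
  rw [Jac, Matrix.of_apply, gPoly_eq, map_sum, map_sum]
  exact Finset.sum_congr rfl fun p _ => by rw [pderiv_C_mul, map_mul, eval_C]

/-- A matrix with a nonzero entry has positive rank. -/
lemma rank_pos_of_ne_zero {α β : Type} [Fintype α] [Fintype β] [DecidableEq β]
    (M : Matrix α β 𝕂) {t : α} {v : β} (h : M t v ≠ 0) : 0 < M.rank := by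
  rw [Matrix.rank]
  have hy : M.mulVec (Pi.single v 1) ∈ LinearMap.range M.mulVecLin :=
    ⟨Pi.single v 1, rfl⟩
  have hyne : M.mulVec (Pi.single v 1) ≠ 0 := by
    intro h0
    apply h
    have := congrFun h0 t
    rw [Matrix.mulVec_single] at this
    simpa using this
  haveI : Nontrivial (LinearMap.range M.mulVecLin) :=
    nontrivial_of_ne ⟨_, hy⟩ 0 (by simpa using hyne)
  exact Module.finrank_pos

/-- A matrix all of whose nonzero entries lie in a single column has rank ≤ 1. -/
lemma rank_le_one_of_single_col {α β : Type} [Fintype α] [Fintype β] [DecidableEq β]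
    (M : Matrix α β 𝕂) (v₀ : β) (h : ∀ t v, v ≠ v₀ → M t v = 0) : M.rank ≤ 1 := by
  set u : β → 𝕂 := fun v => if v = v₀ then (1 : 𝕂) else 0 with hu
  have hM : M = Matrix.vecMulVec (fun t => M t v₀) u := by
    ext t v
    rw [Matrix.vecMulVec_apply]
    by_cases hv : v = v₀
    · subst hv; simp [hu]
    · rw [hu]; simp only; rw [if_neg hv, mul_zero, h t v hv]
  rw [hM, Matrix.vecMulVec_eq Unit]
  calc (Matrix.replicateCol Unit (fun t => M t v₀) * Matrix.replicateRow Unit u).rank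
      ≤ (Matrix.replicateCol Unit (fun t => M t v₀)).rank := Matrix.rank_mul_le_left _ _
    _ ≤ Fintype.card Unit := Matrix.rank_le_card_width _
    _ = 1 := Fintype.card_unit

/-- Three pairwise distinct elements force `3 ≤ card`. -/
lemma three_le_card {α : Type} [Fintype α] [DecidableEq α] {a b d : α}
    (hab : a ≠ b) (had : a ≠ d) (hbd : b ≠ d) : 3 ≤ Fintype.card α := by
  have h : ({a, b, d} : Finset α).card = 3 := by
    rw [Finset.card_insert_of_notMem (by simp [hab, had]),
      Finset.card_insert_of_notMem (by simp [hbd]), Finset.card_singleton]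
  calc 3 = ({a, b, d} : Finset α).card := h.symm
    _ ≤ Fintype.card α := Finset.card_le_univ _

lemma four_le_card {α : Type} [Fintype α] [DecidableEq α] {a b d e : α}
    (hab : a ≠ b) (had : a ≠ d) (hae : a ≠ e) (hbd : b ≠ d) (hbe : b ≠ e) (hde : d ≠ e) :
    4 ≤ Fintype.card α := by
  have h : ({a, b, d, e} : Finset α).card = 4 := by
    rw [Finset.card_insert_of_notMem (by simp [hab, had, hae]),
      Finset.card_insert_of_notMem (by simp [hbd, hbe]),
      Finset.card_insert_of_notMem (by simp [hde]), Finset.card_singleton]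
  calc 4 = ({a, b, d, e} : Finset α).card := h.symm
    _ ≤ Fintype.card α := Finset.card_le_univ _

/-- If `3 ≤ card α` there is an element distinct from two given ones. -/
lemma exists_third {α : Type} [Fintype α] [DecidableEq α] {a b : α}
    (h3 : 3 ≤ Fintype.card α) : ∃ d : α, d ≠ a ∧ d ≠ b := by
  have h : (Finset.univ \ {a, b} : Finset α).Nonempty := by
    rw [← Finset.card_pos, Finset.card_sdiff_of_subset (Finset.subset_univ _)]
    have : ({a, b} : Finset α).card ≤ 2 := Finset.card_insert_le _ _ |>.trans (by simp)
    rw [Finset.card_univ]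
    omega
  obtain ⟨d, hd⟩ := h
  rw [Finset.mem_sdiff, Finset.mem_insert, Finset.mem_singleton] at hd
  exact ⟨d, fun h => hd.2 (Or.inl h), fun h => hd.2 (Or.inr h)⟩

end
end S18
namespace S18
open MvPolynomial Finset

noncomputable section
variable {𝕂 : Type} [Field 𝕂] {r c m : ℕ} {nn : Fin (r + 1) → ℕ}

lemma exists_notin {α : Type} [Fintype α] [DecidableEq α] (s : Finset α)
    (h : s.card < Fintype.card α) : ∃ d : α, d ∉ s := by
  have hne : (Finset.univ \ s).Nonempty := by
    rw [← Finset.card_pos, Finset.card_sdiff_of_subset (Finset.subset_univ _), Finset.card_univ]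
    omega
  obtain ⟨d, hd⟩ := hne
  exact ⟨d, (Finset.mem_sdiff.mp hd).2⟩

section Point
variable {i : Fin (r + 1)} {j₁ j₂ : Fin (nn i)} {z : VarIdx r m nn → 𝕂}

/-- z vanishes off the two distinguished coordinates. -/
lemma z_eq_zero (hz : ∀ v : VarIdx r m nn, z v ≠ 0 ↔
      (v = Sum.inl ⟨i, j₁⟩ ∨ v = Sum.inl ⟨i, j₂⟩))
    {v : VarIdx r m nn} (h1 : v ≠ Sum.inl ⟨i, j₁⟩) (h2 : v ≠ Sum.inl ⟨i, j₂⟩) : z v = 0 := by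
  by_contra h0
  rcases (hz v).1 h0 with h | h
  · exact h1 h
  · exact h2 h

lemma z_row_ne (hz : ∀ v : VarIdx r m nn, z v ≠ 0 ↔
      (v = Sum.inl ⟨i, j₁⟩ ∨ v = Sum.inl ⟨i, j₂⟩))
    {i' : Fin (r + 1)} (h : i ≠ i') (j : Fin (nn i')) : z (Sum.inl ⟨i', j⟩) = 0 :=
  z_eq_zero hz (inl_mk_ne h) (inl_mk_ne h)

lemma z_third_eq_zero (hz : ∀ v : VarIdx r m nn, z v ≠ 0 ↔
      (v = Sum.inl ⟨i, j₁⟩ ∨ v = Sum.inl ⟨i, j₂⟩))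
    {j : Fin (nn i)} (h1 : j ≠ j₁) (h2 : j ≠ j₂) : z (Sum.inl ⟨i, j⟩) = 0 :=
  z_eq_zero hz (by rw [Ne, inl_mk_inj]; exact h1) (by rw [Ne, inl_mk_inj]; exact h2)

variable (l : ∀ i : Fin (r + 1), Fin (nn i) → ℕ)

/-- F1: `Tmon i'` vanishes at `z` for `i' ≠ i`. -/
lemma eval_Tmon_offrow (hz : ∀ v : VarIdx r m nn, z v ≠ 0 ↔
      (v = Sum.inl ⟨i, j₁⟩ ∨ v = Sum.inl ⟨i, j₂⟩))
    (hnn : ∀ i', 0 < nn i') (hl : ∀ i' j, 0 < l i' j)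
    {i' : Fin (r + 1)} (h : i ≠ i') :
    eval z (Tmon 𝕂 r m nn l i') = 0 := by
  rw [eval_Tmon]
  refine Finset.prod_eq_zero (Finset.mem_univ (⟨0, hnn i'⟩ : Fin (nn i'))) ?_
  rw [z_row_ne hz h, zero_pow (hl i' _).ne']

/-- F2: `Tmon i` vanishes at `z` when `3 ≤ nn i`. -/
lemma eval_Tmon_row (hz : ∀ v : VarIdx r m nn, z v ≠ 0 ↔
      (v = Sum.inl ⟨i, j₁⟩ ∨ v = Sum.inl ⟨i, j₂⟩))
    (hl : ∀ i' j, 0 < l i' j) (h3 : 3 ≤ nn i) :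
    eval z (Tmon 𝕂 r m nn l i) = 0 := by
  obtain ⟨j₃, h1, h2⟩ := exists_third (α := Fin (nn i)) (a := j₁) (b := j₂)
    (by rwa [Fintype.card_fin])
  rw [eval_Tmon]
  refine Finset.prod_eq_zero (Finset.mem_univ j₃) ?_
  rw [z_third_eq_zero hz h1 h2, zero_pow (hl i _).ne']

/-- F3: `Tmon i` does not vanish at `z` when `nn i = 2`-ish (¬ 3 ≤ nn i). -/
lemma eval_Tmon_row_ne (hz : ∀ v : VarIdx r m nn, z v ≠ 0 ↔
      (v = Sum.inl ⟨i, j₁⟩ ∨ v = Sum.inl ⟨i, j₂⟩))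
    (hj : j₁ ≠ j₂) (h3 : ¬ 3 ≤ nn i) :
    eval z (Tmon 𝕂 r m nn l i) ≠ 0 := by
  rw [eval_Tmon]
  rw [Finset.prod_ne_zero_iff]
  intro j _
  apply pow_ne_zero
  rw [hz]
  by_cases h1 : j = j₁
  · exact Or.inl (by rw [h1])
  by_cases h2 : j = j₂
  · exact Or.inr (by rw [h2])
  exact absurd (by simpa using three_le_card hj (Ne.symm h1) (Ne.symm h2)) h3

/-- P1a. -/
lemma pderiv_Tmon_inr (i' : Fin (r + 1)) (k : Fin m) :
    pderiv (Sum.inr k : VarIdx r m nn) (Tmon 𝕂 r m nn l i') = 0 :=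
  eval_pderiv_Tmon_zero l i' _ (rowF_inr i' (l i') k)

/-- P1b. -/
lemma pderiv_Tmon_offrow {i' i₀ : Fin (r + 1)} (h : i₀ ≠ i') (j₀ : Fin (nn i₀)) :
    pderiv (Sum.inl ⟨i₀, j₀⟩ : VarIdx r m nn) (Tmon 𝕂 r m nn l i') = 0 :=
  eval_pderiv_Tmon_zero l i' _ (rowF_inl_ne h (l i') j₀)

/-- P2: derivative in row `i' ≠ i` vanishes at `z` (uses irredundancy). -/
lemma eval_pderiv_Tmon_offrow (hz : ∀ v : VarIdx r m nn, z v ≠ 0 ↔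
      (v = Sum.inl ⟨i, j₁⟩ ∨ v = Sum.inl ⟨i, j₂⟩))
    (hirr : ∀ i', 2 ≤ ∑ j' : Fin (nn i'), l i' j')
    {i' : Fin (r + 1)} (h : i ≠ i') (j₀ : Fin (nn i')) :
    eval z (pderiv (Sum.inl ⟨i', j₀⟩ : VarIdx r m nn) (Tmon 𝕂 r m nn l i')) = 0 := by
  rw [eval_pderiv_Tmon]
  by_cases h2 : 2 ≤ l i' j₀
  · rw [Finset.prod_eq_zero (Finset.mem_univ j₀), mul_zero]
    rw [z_row_ne hz h, if_pos rfl, zero_pow (by omega)]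
  · have hex : ∃ j, j ≠ j₀ ∧ 1 ≤ l i' j := by
      by_contra hno
      push_neg at hno
      have : ∑ j' : Fin (nn i'), l i' j' = l i' j₀ :=
        Finset.sum_eq_single j₀ (fun j _ hne => by have := hno j hne; omega) (by simp)
      have := hirr i'
      omega
    obtain ⟨j, hjne, hj1⟩ := hex
    rw [Finset.prod_eq_zero (Finset.mem_univ j), mul_zero]
    rw [z_row_ne hz h, if_neg hjne, zero_pow (by omega)]

/-- P3a: derivative in column `j₀ ∈ {j₁, j₂}` vanishes at `z` when `3 ≤ nn i`. -/
lemma eval_pderiv_Tmon_distinguished (hz : ∀ v : VarIdx r m nn, z v ≠ 0 ↔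
      (v = Sum.inl ⟨i, j₁⟩ ∨ v = Sum.inl ⟨i, j₂⟩))
    (hl : ∀ i' j, 0 < l i' j) (h3 : 3 ≤ nn i)
    {j₀ : Fin (nn i)} (hmem : j₀ = j₁ ∨ j₀ = j₂) :
    eval z (pderiv (Sum.inl ⟨i, j₀⟩ : VarIdx r m nn) (Tmon 𝕂 r m nn l i)) = 0 := by
  obtain ⟨j₃, h1, h2⟩ := exists_third (α := Fin (nn i)) (a := j₁) (b := j₂)
    (by rwa [Fintype.card_fin])
  have hne : j₃ ≠ j₀ := by rcases hmem with rfl | rfl <;> assumption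
  rw [eval_pderiv_Tmon, Finset.prod_eq_zero (Finset.mem_univ j₃), mul_zero]
  rw [z_third_eq_zero hz h1 h2, if_neg hne, zero_pow (by simpa using (hl i j₃).ne')]

/-- P3b: all derivatives in row `i` vanish at `z` when `4 ≤ nn i`. -/
lemma eval_pderiv_Tmon_four (hz : ∀ v : VarIdx r m nn, z v ≠ 0 ↔
      (v = Sum.inl ⟨i, j₁⟩ ∨ v = Sum.inl ⟨i, j₂⟩))
    (hl : ∀ i' j, 0 < l i' j) (h4 : 4 ≤ nn i) (j₀ : Fin (nn i)) :
    eval z (pderiv (Sum.inl ⟨i, j₀⟩ : VarIdx r m nn) (Tmon 𝕂 r m nn l i)) = 0 := by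
  have hc3 : ({j₁, j₂, j₀} : Finset (Fin (nn i))).card ≤ 3 := by
    refine le_trans (Finset.card_insert_le _ _) ?_
    have h' := Finset.card_insert_le j₂ ({j₀} : Finset (Fin (nn i)))
    simp only [Finset.card_singleton] at h'
    omega
  obtain ⟨j₄, hj₄⟩ := exists_notin ({j₁, j₂, j₀} : Finset (Fin (nn i)))
    (by rw [Fintype.card_fin]; omega)
  simp only [Finset.mem_insert, Finset.mem_singleton, not_or] at hj₄
  obtain ⟨h1, h2, h0⟩ := hj₄
  rw [eval_pderiv_Tmon, Finset.prod_eq_zero (Finset.mem_univ j₄), mul_zero]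
  rw [z_third_eq_zero hz h1 h2, if_neg h0, zero_pow (by simpa using (hl i j₄).ne')]

/-- P3c: derivative in a non-distinguished column with exponent ≥ 2 vanishes at `z`. -/
lemma eval_pderiv_Tmon_bigexp (hz : ∀ v : VarIdx r m nn, z v ≠ 0 ↔
      (v = Sum.inl ⟨i, j₁⟩ ∨ v = Sum.inl ⟨i, j₂⟩))
    {j₀ : Fin (nn i)} (h1 : j₀ ≠ j₁) (h2 : j₀ ≠ j₂) (hbig : 2 ≤ l i j₀) :
    eval z (pderiv (Sum.inl ⟨i, j₀⟩ : VarIdx r m nn) (Tmon 𝕂 r m nn l i)) = 0 := by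
  rw [eval_pderiv_Tmon, Finset.prod_eq_zero (Finset.mem_univ j₀), mul_zero]
  rw [z_third_eq_zero hz h1 h2, if_pos rfl, zero_pow (by omega)]

/-- P4: the surviving derivative is nonzero when `nn i = 3` and the exponent is 1. -/
lemma eval_pderiv_Tmon_ne_zero [CharZero 𝕂] (hz : ∀ v : VarIdx r m nn, z v ≠ 0 ↔
      (v = Sum.inl ⟨i, j₁⟩ ∨ v = Sum.inl ⟨i, j₂⟩))
    (hj : j₁ ≠ j₂)
    (hnn3 : nn i = 3) {j₀ : Fin (nn i)} (h1 : j₀ ≠ j₁) (h2 : j₀ ≠ j₂)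
    (hl1 : l i j₀ = 1) (hl : ∀ i' j, 0 < l i' j) :
    eval z (pderiv (Sum.inl ⟨i, j₀⟩ : VarIdx r m nn) (Tmon 𝕂 r m nn l i)) ≠ 0 := by
  rw [eval_pderiv_Tmon]
  apply mul_ne_zero
  · exact_mod_cast Nat.cast_ne_zero.mpr (by omega)
  · rw [Finset.prod_ne_zero_iff]
    intro j _
    by_cases hjj : j = j₀
    · subst hjj; rw [if_pos rfl, hl1]; simp
    · rw [if_neg hjj]
      apply pow_ne_zero
      rw [hz]
      by_cases ha : j = j₁
      · exact Or.inl (by rw [ha])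
      by_cases hb : j = j₂
      · exact Or.inr (by rw [hb])
      · exfalso
        have := four_le_card (a := j₁) (b := j₂) (d := j₀) (e := j)
          hj h1.symm (Ne.symm ha) h2.symm (Ne.symm hb) (Ne.symm hjj)
        rw [Fintype.card_fin, hnn3] at this
        omega

end Point
end
end S18
namespace S18
open MvPolynomial Finset

noncomputable section
variable {𝕂 : Type} [Field 𝕂] {r c m : ℕ} {nn : Fin (r + 1) → ℕ}

section Point2
variable {i : Fin (r + 1)} {j₁ j₂ : Fin (nn i)} {z : VarIdx r m nn → 𝕂}
  (hcr : c ≤ r) (l : ∀ i : Fin (r + 1), Fin (nn i) → ℕ)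
  (A : Matrix (Fin (c + 1)) (Fin (r + 1)) 𝕂)

/-- Jacobian entries in the `S_k` columns vanish. -/
lemma Jac_inr (z : VarIdx r m nn → 𝕂) (t : Fin (r - c)) (k : Fin m) :
    Jac 𝕂 r c m hcr nn l A z t (Sum.inr k) = 0 := by
  rw [Jac_apply]
  apply Finset.sum_eq_zero
  intro p _
  rw [pderiv_Tmon_inr, map_zero, mul_zero]

/-- Jacobian entries in `T`-columns of rows `i₀ ≠ i` vanish at `z`. -/
lemma Jac_offrow (hz : ∀ v : VarIdx r m nn, z v ≠ 0 ↔
      (v = Sum.inl ⟨i, j₁⟩ ∨ v = Sum.inl ⟨i, j₂⟩))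
    (hirr : ∀ i', 2 ≤ ∑ j' : Fin (nn i'), l i' j')
    {i₀ : Fin (r + 1)} (hne : i₀ ≠ i) (j₀ : Fin (nn i₀)) (t : Fin (r - c)) :
    Jac 𝕂 r c m hcr nn l A z t (Sum.inl ⟨i₀, j₀⟩) = 0 := by
  rw [Jac_apply]
  apply Finset.sum_eq_zero
  intro p _
  rcases eq_or_ne (colOf r c hcr t p) i₀ with h | h
  · subst h
    rw [eval_pderiv_Tmon_offrow l hz hirr (Ne.symm hne) j₀, mul_zero]
  · rw [pderiv_Tmon_offrow l (Ne.symm h) j₀, map_zero, mul_zero]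

/-- Jacobian entries in row-`i` columns whose `Tmon`-derivative vanishes at `z` are zero. -/
lemma Jac_row_zero (j₀ : Fin (nn i))
    (hP : eval z (pderiv (Sum.inl ⟨i, j₀⟩ : VarIdx r m nn) (Tmon 𝕂 r m nn l i)) = 0)
    (t : Fin (r - c)) :
    Jac 𝕂 r c m hcr nn l A z t (Sum.inl ⟨i, j₀⟩) = 0 := by
  rw [Jac_apply]
  apply Finset.sum_eq_zero
  intro p _
  rcases eq_or_ne (colOf r c hcr t p) i with h | h
  · rw [h, hP, mul_zero]
  · rw [pderiv_Tmon_offrow l (Ne.symm h) j₀, map_zero, mul_zero]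

/-- Value of a Jacobian entry in a row-`i` column. -/
lemma Jac_row_val (t : Fin (r - c)) {p₀ : Fin (c + 2)} (hp₀ : colOf r c hcr t p₀ = i)
    (j₀ : Fin (nn i)) :
    Jac 𝕂 r c m hcr nn l A z t (Sum.inl ⟨i, j₀⟩) =
      eAP r c hcr A t p₀ *
        eval z (pderiv (Sum.inl ⟨i, j₀⟩ : VarIdx r m nn) (Tmon 𝕂 r m nn l i)) := by
  rw [Jac_apply, Finset.sum_eq_single p₀]
  · rw [hp₀]
  · intro p _ hne
    have h : colOf r c hcr t p ≠ i := by
      intro hh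
      exact hne (colOf_injective hcr t (hh.trans hp₀.symm))
    rw [pderiv_Tmon_offrow l (Ne.symm h) j₀, map_zero, mul_zero]
  · intro habs
    exact absurd (Finset.mem_univ p₀) habs

/-- Existence of a point supported exactly on the two distinguished coordinates. -/
lemma exists_point (hnn : ∀ i', 0 < nn i') (hl : ∀ i' j, 0 < l i' j) (h3 : 3 ≤ nn i) :
    ∃ z : VarIdx r m nn → 𝕂,
      (∀ t : Fin (r - c), eval z (gPoly 𝕂 r c m hcr nn l A t) = 0) ∧
      (∀ v : VarIdx r m nn, z v ≠ 0 ↔ (v = Sum.inl ⟨i, j₁⟩ ∨ v = Sum.inl ⟨i, j₂⟩)) := by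
  classical
  set z : VarIdx r m nn → 𝕂 :=
    fun v => if v = Sum.inl ⟨i, j₁⟩ ∨ v = Sum.inl ⟨i, j₂⟩ then 1 else 0 with hzdef
  have hz : ∀ v : VarIdx r m nn, z v ≠ 0 ↔
      (v = Sum.inl ⟨i, j₁⟩ ∨ v = Sum.inl ⟨i, j₂⟩) := by
    intro v
    rw [hzdef]
    by_cases h : v = Sum.inl ⟨i, j₁⟩ ∨ v = Sum.inl ⟨i, j₂⟩
    · simp [h]
    · simp [h]
  refine ⟨z, fun t => ?_, hz⟩
  rw [eval_gPoly]
  apply Finset.sum_eq_zero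
  intro p _
  rcases eq_or_ne i (colOf r c hcr t p) with h | h
  · rw [← h, eval_Tmon_row l hz hl h3, mul_zero]
  · rw [eval_Tmon_offrow l hz hnn hl h, mul_zero]

end Point2
end
end S18

/-- Assume `r > c` and fix `i` and distinct `j₁ ≠ j₂`.  (a) There is
a point of `X̄` whose nonzero coordinates are exactly `z_{ij₁}, z_{ij₂}` iff `n_i ≥ 3`.
(b) If moreover the data is irredundant and `n_i ≥ 3`, then every such point of `X̄` has
full-rank Jacobian iff `r = c+1`, `n_i = 3` and `l_{ij} = 1` for the index
`j ∉ {j₁, j₂}`. -/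
theorem statement_18
    (𝕂 : Type) [Field 𝕂] [IsAlgClosed 𝕂] [CharZero 𝕂]
    (r c m : ℕ) (hc : 0 < c) (hcr : c ≤ r)
    (nn : Fin (r + 1) → ℕ) (hnn : ∀ i, 0 < nn i)
    (l : ∀ i : Fin (r + 1), Fin (nn i) → ℕ) (hl : ∀ i j, 0 < l i j)
    (A : Matrix (Fin (c + 1)) (Fin (r + 1)) 𝕂)
    (hA : ∀ s : Finset (Fin (r + 1)), s.card = c + 1 →
      LinearIndependent 𝕂 fun j : s => A.transpose (j : Fin (r + 1)))
    (hrc : c < r) (i : Fin (r + 1)) (j₁ j₂ : Fin (nn i)) (hj : j₁ ≠ j₂) :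
    ((∃ z : VarIdx r m nn → 𝕂,
        (∀ t : Fin (r - c), MvPolynomial.eval z (gPoly 𝕂 r c m hcr nn l A t) = 0) ∧
        (∀ v : VarIdx r m nn, z v ≠ 0 ↔ (v = Sum.inl ⟨i, j₁⟩ ∨ v = Sum.inl ⟨i, j₂⟩))) ↔
      3 ≤ nn i) ∧
    ((∀ i' : Fin (r + 1), 2 ≤ ∑ j' : Fin (nn i'), l i' j') → 3 ≤ nn i →
      ((∀ z : VarIdx r m nn → 𝕂,
          (∀ t : Fin (r - c), MvPolynomial.eval z (gPoly 𝕂 r c m hcr nn l A t) = 0) →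
          (∀ v : VarIdx r m nn, z v ≠ 0 ↔ (v = Sum.inl ⟨i, j₁⟩ ∨ v = Sum.inl ⟨i, j₂⟩)) →
          (Jac 𝕂 r c m hcr nn l A z).rank = r - c) ↔
        (r = c + 1 ∧ nn i = 3 ∧ ∀ j : Fin (nn i), j ≠ j₁ → j ≠ j₂ → l i j = 1))) := by
  classical
  constructor
  · constructor
    · rintro ⟨z, hgz, hz⟩
      by_contra h3
      obtain ⟨t, p, hp⟩ := S18.exists_colOf_eq hcr hrc i
      have hone := hgz t
      rw [S18.eval_gPoly] at hone
      have hterms : ∀ p' ∈ Finset.univ, p' ≠ p →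
          S18.eAP r c hcr A t p' *
            MvPolynomial.eval z (Tmon 𝕂 r m nn l (colOf r c hcr t p')) = 0 := by
        intro p' _ hne
        have hni : i ≠ colOf r c hcr t p' := by
          intro he
          exact hne (S18.colOf_injective hcr t (he.symm.trans hp.symm))
        rw [S18.eval_Tmon_offrow l hz hnn hl hni, mul_zero]
      rw [Finset.sum_eq_single p hterms
        (fun h => absurd (Finset.mem_univ p) h), hp] at hone
      exact (mul_ne_zero (S18.eAP_ne_zero hcr A hA t p)
        (S18.eval_Tmon_row_ne l hz hj h3)) hone
    · intro h3
      exact S18.exists_point (j₁ := j₁) (j₂ := j₂) hcr l A hnn hl h3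
  · intro hirr h3
    constructor
    · intro Hfull
      obtain ⟨z, hgz, hz⟩ := S18.exists_point (j₁ := j₁) (j₂ := j₂) hcr l A hnn hl h3
      have hrank := Hfull z hgz hz
      have hex : ∃ (t : Fin (r - c)) (v : VarIdx r m nn),
          Jac 𝕂 r c m hcr nn l A z t v ≠ 0 := by
        by_contra hno
        push_neg at hno
        have hJ0 : Jac 𝕂 r c m hcr nn l A z = 0 := by
          ext t v; exact hno t v
        rw [hJ0, Matrix.rank_zero] at hrank
        omega
      obtain ⟨t, v, hv⟩ := hex
      rcases v with (⟨i₀, j₀⟩ | k)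
      swap
      · exact absurd (S18.Jac_inr hcr l A z t k) hv
      rcases eq_or_ne i₀ i with rfl | hne
      swap
      · exact absurd (S18.Jac_offrow hcr l A hz hirr hne j₀ t) hv
      have hP : MvPolynomial.eval z
          (MvPolynomial.pderiv (Sum.inl ⟨i₀, j₀⟩ : VarIdx r m nn)
            (Tmon 𝕂 r m nn l i₀)) ≠ 0 := by
        intro h0
        exact hv (S18.Jac_row_zero hcr l A j₀ h0 t)
      have hj01 : j₀ ≠ j₁ := fun h =>
        hP (S18.eval_pderiv_Tmon_distinguished l hz hl h3 (Or.inl h))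
      have hj02 : j₀ ≠ j₂ := fun h =>
        hP (S18.eval_pderiv_Tmon_distinguished l hz hl h3 (Or.inr h))
      have hnn3 : nn i₀ = 3 := by
        by_contra hne3
        exact hP (S18.eval_pderiv_Tmon_four l hz hl (by omega) j₀)
      have hl1 : l i₀ j₀ = 1 := by
        by_contra hne1
        exact hP (S18.eval_pderiv_Tmon_bigexp l hz hj01 hj02 (by have := hl i₀ j₀; omega))
      refine ⟨?_, hnn3, ?_⟩
      · have hle : (Jac 𝕂 r c m hcr nn l A z).rank ≤ 1 := by
          apply S18.rank_le_one_of_single_col _ (Sum.inl ⟨i₀, j₀⟩)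
          intro t' v' hv'
          rcases v' with (⟨i₀', j'⟩ | k)
          · rcases eq_or_ne i₀' i₀ with rfl | hne'
            · have hj' : j' ≠ j₀ := by
                intro h
                exact hv' (by rw [h])
              by_cases ha : j' = j₁
              · exact S18.Jac_row_zero hcr l A j'
                  (S18.eval_pderiv_Tmon_distinguished l hz hl h3 (Or.inl ha)) t'
              by_cases hb : j' = j₂
              · exact S18.Jac_row_zero hcr l A j'
                  (S18.eval_pderiv_Tmon_distinguished l hz hl h3 (Or.inr hb)) t'
              · exfalso
                have h4 := S18.four_le_card (a := j₁) (b := j₂) (d := j₀) (e := j')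
                  hj hj01.symm (Ne.symm ha) hj02.symm (Ne.symm hb) (fun h => hj' h.symm)
                rw [Fintype.card_fin, hnn3] at h4
                omega
            · exact S18.Jac_offrow hcr l A hz hirr hne' j' t'
          · exact S18.Jac_inr hcr l A z t' k
        rw [hrank] at hle
        omega
      · intro j hj1 hj2
        have hjj0 : j = j₀ := by
          by_contra hjj
          have h4 := S18.four_le_card (a := j₁) (b := j₂) (d := j₀) (e := j)
            hj hj01.symm (Ne.symm hj1) hj02.symm (Ne.symm hj2) (fun h => hjj h.symm)
          rw [Fintype.card_fin, hnn3] at h4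
          omega
        rw [hjj0, hl1]
    · rintro ⟨hr1, hnn3, hlone⟩ z hgz hz
      have hrc1 : r - c = 1 := by omega
      obtain ⟨j₃, h31, h32⟩ := S18.exists_third (a := j₁) (b := j₂)
        (by rw [Fintype.card_fin]; omega)
      have ht0 : (0 : ℕ) < r - c := by omega
      obtain ⟨p₀, hp₀⟩ := S18.exists_colOf_eq' hcr hr1 ⟨0, ht0⟩ i
      have hentry : Jac 𝕂 r c m hcr nn l A z ⟨0, ht0⟩ (Sum.inl ⟨i, j₃⟩) ≠ 0 := by
        rw [S18.Jac_row_val hcr l A ⟨0, ht0⟩ hp₀ j₃]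
        exact mul_ne_zero (S18.eAP_ne_zero hcr A hA ⟨0, ht0⟩ p₀)
          (S18.eval_pderiv_Tmon_ne_zero l hz hj hnn3 h31 h32 (hlone j₃ h31 h32) hl)
      have h1 : 0 < (Jac 𝕂 r c m hcr nn l A z).rank :=
        S18.rank_pos_of_ne_zero _ hentry
      have h2 : (Jac 𝕂 r c m hcr nn l A z).rank ≤ 1 := by
        have h := Matrix.rank_le_card_height (Jac 𝕂 r c m hcr nn l A z)
        simp only [Fintype.card_fin] at h
        exact le_trans h (le_of_eq hrc1)
      have heq : (Jac 𝕂 r c m hcr nn l A z).rank = 1 := le_antisymm h2 h1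
      rw [heq]
      exact hrc1.symm
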